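/- arXiv:2308.14285 — 2 statements merged into one kernel-verified Lean document; each statement's English description precedes it below -/
import Mathlib

section
/- Let R be a commutative Noetherian ring, N ⊆ M and N′ ⊆ M′ proper submodules of finitely generated R-modules, and p₁, …, p_k distinct primes. If P_M(N) = p₁^{r₁}⋯p_k^{r_k} and P_{M′}(N′) = p₁^{s₁}⋯p_k^{s_k} with r_i, s_i ≥ 0 and r_i + s_i > 0 for each i, then P_{M ⊕ M′}(N ⊕ N′) = p₁^{t₁}⋯p_k^{t_k} where t_i = max{r_i, s_i}. -/
variable {R : Type*} [CommRing R] {M : Type*} [AddCommGroup M] [Module R M]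

/-- The colon submodule `(N :_M I) = {x ∈ M | I • x ⊆ N}`. -/
def colonSubmodule (N : Submodule R M) (I : Ideal R) : Submodule R M where
  carrier := {x | ∀ a ∈ I, a • x ∈ N}
  add_mem' := fun hx hy a ha => by simpa [smul_add] using N.add_mem (hx a ha) (hy a ha)
  zero_mem' := fun a _ => by simp
  smul_mem' := fun c x hx a ha => by
    rw [smul_comm]
    exact N.smul_mem c (hx a ha)

/-- `K` is a `p`-prime extension of `N`, i.e. `N` is a `p`-prime submodule of `K`. -/
def IsPrimeExt (p : Ideal R) (N K : Submodule R M) : Prop :=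
  N < K ∧ N.colon K = p ∧ ∀ a : R, ∀ x ∈ K, a • x ∈ N → x ∈ N ∨ a ∈ p

/-- The associated primes of `T / N` for submodules `N ≤ T ≤ M`. -/
def assOf (R : Type*) {M : Type*} [CommRing R] [AddCommGroup M] [Module R M]
    (N T : Submodule R M) : Set (Ideal R) :=
  associatedPrimes R ↥(T.map N.mkQ)

/-- `K` is a maximal `p`-prime extension of `N` inside `T`. -/
def IsMaximalPrimeExtIn (T : Submodule R M) (p : Ideal R) (N K : Submodule R M) : Prop :=
  K ≤ T ∧ IsPrimeExt p N K ∧ ∀ L ≤ T, IsPrimeExt p N L → ¬ K < L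

/-- `K` is a regular `p`-prime extension of `N` inside `T`: a maximal `p`-prime
extension where `p` is a maximal element of `Ass (T/N)`. -/
def IsRegularPrimeExtIn (T : Submodule R M) (p : Ideal R) (N K : Submodule R M) : Prop :=
  IsMaximalPrimeExtIn T p N K ∧ Maximal (· ∈ assOf R N T) p

/-- A regular prime extension (RPE) filtration inside `T` with primes `p i`. -/
def IsRPEFiltrationIn (T : Submodule R M) {n : ℕ}
    (F : Fin (n + 1) → Submodule R M) (p : Fin n → Ideal R) : Prop :=
  ∀ i : Fin n, IsRegularPrimeExtIn T (p i) (F i.castSucc) (F i.succ)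

/-- The generalized prime ideal factorization of `N` in `T` is given by the multiset `s`:
there is an RPE filtration of `T` over `N` whose multiset of primes is `s`. -/
def HasGPIF (N T : Submodule R M) (s : Multiset (Ideal R)) : Prop :=
  ∃ (n : ℕ) (F : Fin (n + 1) → Submodule R M) (p : Fin n → Ideal R),
    F 0 = N ∧ F (Fin.last n) = T ∧ IsRPEFiltrationIn T F p ∧ (List.ofFn p : Multiset (Ideal R)) = s

/-! ### Auxiliary development -/

open Submodule

section Aux

variable {R : Type*} [CommRing R] {M : Type*} [AddCommGroup M] [Module R M]

/-- The annihilator of `x` modulo `N`. -/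
def qann (N : Submodule R M) (x : M) : Ideal R :=
  N.comap (LinearMap.toSpanSingleton R M x)

lemma mem_qann {N : Submodule R M} {x : M} {a : R} : a ∈ qann N x ↔ a • x ∈ N := Iff.rfl

lemma qann_eq_top {N : Submodule R M} {x : M} : qann N x = ⊤ ↔ x ∈ N := by
  constructor
  · intro h
    have h1 : (1 : R) ∈ qann N x := h.ge trivial
    simpa using mem_qann.1 h1
  · intro h
    ext a
    simp only [Submodule.mem_top, iff_true]
    exact N.smul_mem a h

lemma assOf_top_eq (N : Submodule R M) :
    assOf R N ⊤ = associatedPrimes R (M ⧸ N) := by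
  unfold assOf
  rw [Submodule.map_top, Submodule.range_mkQ]
  exact LinearEquiv.AssociatedPrimes.eq Submodule.topEquiv

lemma annihilator_span_mkQ (N : Submodule R M) (x : M) :
    (Submodule.span R {N.mkQ x}).annihilator = qann N x := by
  ext a
  rw [Submodule.mem_annihilator_span_singleton, mem_qann]
  rw [← map_smul, ← Submodule.Quotient.mk_eq_zero N, Submodule.mkQ_apply]

lemma mem_assOf_iff [IsNoetherianRing R] {N : Submodule R M} {p : Ideal R} :
    p ∈ assOf R N ⊤ ↔ p.IsPrime ∧ ∃ x : M, qann N x = p := by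
  rw [assOf_top_eq, AssociatedPrimes.mem_iff, IsAssociatedPrime, Submodule.isAssociatedPrime_iff]
  refine and_congr_right fun _ => ⟨?_, ?_⟩
  · rintro ⟨y, hy⟩
    obtain ⟨x, rfl⟩ := N.mkQ_surjective y
    exact ⟨x, by rw [← annihilator_span_mkQ, hy, Submodule.bot_colon']⟩
  · rintro ⟨x, hx⟩
    exact ⟨N.mkQ x, by rw [Submodule.bot_colon', annihilator_span_mkQ, hx]⟩

lemma prime_of_mem_assOf [IsNoetherianRing R] {N : Submodule R M} {p : Ideal R} (h : p ∈ assOf R N ⊤) : p.IsPrime :=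
  (mem_assOf_iff.1 h).1

lemma not_mem_of_qann_eq_prime {N : Submodule R M} {p : Ideal R} {x : M}
    (hp : p.IsPrime) (h : qann N x = p) : x ∉ N := fun hx =>
  hp.ne_top (h ▸ qann_eq_top.2 hx)

lemma assOf_self_top [IsNoetherianRing R] : assOf R (⊤ : Submodule R M) ⊤ = ∅ := by
  ext p
  simp only [Set.mem_empty_iff_false, iff_false, mem_assOf_iff]
  rintro ⟨hp, x, hx⟩
  exact hp.ne_top (hx ▸ qann_eq_top.2 Submodule.mem_top)

/-- Any `qann` of an element outside `N` is contained in an associated prime. -/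
lemma exists_assOf_qann_le [IsNoetherianRing R] {N : Submodule R M} {x : M} (hx : x ∉ N) :
    ∃ p ∈ assOf R N ⊤, qann N x ≤ p := by
  have hx' : N.mkQ x ≠ 0 := by
    rwa [Ne, Submodule.mkQ_apply, Submodule.Quotient.mk_eq_zero]
  obtain ⟨P, hP, hle⟩ := exists_le_isAssociatedPrime_of_isNoetherianRing R (N.mkQ x) hx'
  refine ⟨P, by rwa [assOf_top_eq, AssociatedPrimes.mem_iff], ?_⟩
  rwa [Submodule.bot_colon', annihilator_span_mkQ] at hle

lemma assOf_nonempty [IsNoetherianRing R] {N : Submodule R M} (hN : N ≠ ⊤) :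
    (assOf R N ⊤).Nonempty := by
  obtain ⟨x, hx⟩ : ∃ x, x ∉ N := by
    by_contra h
    push_neg at h
    exact hN (Submodule.eq_top_iff'.2 h)
  obtain ⟨p, hp, -⟩ := exists_assOf_qann_le hx
  exact ⟨p, hp⟩

end Aux

section Aux2

variable {R : Type*} [CommRing R] {M : Type*} [AddCommGroup M] [Module R M]
  {M' : Type*} [AddCommGroup M'] [Module R M']

lemma mem_colonSubmodule {N : Submodule R M} {I : Ideal R} {x : M} :
    x ∈ colonSubmodule N I ↔ ∀ a ∈ I, a • x ∈ N := Iff.rfl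

lemma le_colonSubmodule (N : Submodule R M) (I : Ideal R) : N ≤ colonSubmodule N I :=
  fun _ hx _ _ => N.smul_mem _ hx

lemma colonSubmodule_top (I : Ideal R) :
    colonSubmodule (⊤ : Submodule R M) I = ⊤ :=
  top_le_iff.1 (le_colonSubmodule ⊤ I)

lemma colonSubmodule_comm (N : Submodule R M) (I J : Ideal R) :
    colonSubmodule (colonSubmodule N I) J = colonSubmodule (colonSubmodule N J) I := by
  ext x
  simp only [mem_colonSubmodule]
  constructor
  · intro h a ha b hb
    have := h b hb a ha
    rwa [smul_comm] at this
  · intro h a ha b hb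
    have := h b hb a ha
    rwa [smul_comm] at this

lemma colonSubmodule_prod (N : Submodule R M) (N' : Submodule R M') (I : Ideal R) :
    colonSubmodule (N.prod N') I = (colonSubmodule N I).prod (colonSubmodule N' I) := by
  ext x
  simp only [mem_colonSubmodule, Submodule.mem_prod]
  constructor
  · intro h
    exact ⟨fun a ha => (h a ha).1, fun a ha => (h a ha).2⟩
  · rintro ⟨h1, h2⟩ a ha
    exact ⟨h1 a ha, h2 a ha⟩

lemma qann_prod (N : Submodule R M) (N' : Submodule R M') (x : M) (x' : M') :
    qann (N.prod N') (x, x') = qann N x ⊓ qann N' x' := by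
  ext a
  simp only [mem_qann, Submodule.mem_inf]
  rfl

lemma mem_assOf_prod_iff [IsNoetherianRing R] {N : Submodule R M} {N' : Submodule R M'} {p : Ideal R} :
    p ∈ assOf R (N.prod N') ⊤ ↔ p ∈ assOf R N ⊤ ∨ p ∈ assOf R N' ⊤ := by
  simp only [mem_assOf_iff]
  constructor
  · rintro ⟨hp, ⟨x, x'⟩, hx⟩
    rw [qann_prod] at hx
    have hmul : qann N x * qann N' x' ≤ p := hx ▸ Ideal.mul_le_inf
    rcases hp.mul_le.1 hmul with h | h
    · exact Or.inl ⟨hp, x, le_antisymm h (hx ▸ inf_le_left)⟩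
    · exact Or.inr ⟨hp, x', le_antisymm h (hx ▸ inf_le_right)⟩
  · rintro (⟨hp, x, hx⟩ | ⟨hp, x', hx⟩)
    · refine ⟨hp, (x, 0), ?_⟩
      rw [qann_prod, hx, qann_eq_top.2 N'.zero_mem, inf_top_eq]
    · refine ⟨hp, (0, x'), ?_⟩
      rw [qann_prod, hx, qann_eq_top.2 N.zero_mem, top_inf_eq]

/-- If no associated prime of `N` contains `p` (other than possibly `p` itself, which
is not associated), then the `p`-socle is trivial. -/
lemma colonSubmodule_eq_self [IsNoetherianRing R] {N : Submodule R M} {p : Ideal R}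
    (hmax : ∀ q ∈ assOf R N ⊤, p ≤ q → q ≤ p) (hnot : p ∉ assOf R N ⊤) :
    colonSubmodule N p = N := by
  refine le_antisymm (fun x hx => ?_) (le_colonSubmodule N p)
  by_contra hxN
  obtain ⟨q, hq, hle⟩ := exists_assOf_qann_le hxN
  have hpq : p ≤ q := le_trans (fun a ha => mem_qann.2 (hx a ha)) hle
  have : q = p := le_antisymm (hmax q hq hpq) hpq
  exact hnot (this ▸ hq)

/-- If `p` is a maximal associated prime of `M/N`, then `colonSubmodule N p` is a regular
`p`-prime extension of `N` in `⊤`. -/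
lemma isRegularPrimeExtIn_colonSubmodule [IsNoetherianRing R] {N : Submodule R M} {p : Ideal R}
    (hmax : Maximal (· ∈ assOf R N ⊤) p) :
    IsRegularPrimeExtIn ⊤ p N (colonSubmodule N p) := by
  obtain ⟨hp, x, hx⟩ := mem_assOf_iff.1 hmax.1
  have hxN : x ∉ N := not_mem_of_qann_eq_prime hp hx
  have hxC : x ∈ colonSubmodule N p := fun a ha => mem_qann.1 (hx ▸ ha : a ∈ qann N x)
  refine ⟨⟨le_top, ⟨?_, ?_, ?_⟩, ?_⟩, hmax⟩
  · exact lt_of_le_of_ne (le_colonSubmodule N p) (fun h => hxN (h ▸ hxC))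
  · ext a
    rw [Submodule.mem_colon]
    constructor
    · intro h
      exact hx ▸ mem_qann.2 (h x hxC)
    · intro ha z hz
      exact mem_colonSubmodule.1 hz a ha
  · intro a z hz haz
    by_cases hzN : z ∈ N
    · exact Or.inl hzN
    · refine Or.inr ?_
      obtain ⟨q, hq, hle⟩ := exists_assOf_qann_le hzN
      have hpq : p ≤ q := le_trans (fun b hb => mem_qann.2 (mem_colonSubmodule.1 hz b hb)) hle
      have hqp : q ≤ p := hmax.2 hq hpq
      exact hqp (hle (mem_qann.2 haz))
  · intro L _ hL hlt
    have : L ≤ colonSubmodule N p := by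
      intro z hz a ha
      have : a ∈ N.colon L := hL.2.1 ▸ ha
      exact Submodule.mem_colon.1 this z hz
    exact (lt_irrefl _ (lt_of_lt_of_le hlt this))

/-- Uniqueness: any regular `p`-prime extension of `N` in `⊤` equals `colonSubmodule N p`. -/
lemma IsRegularPrimeExtIn.eq_colonSubmodule [IsNoetherianRing R] {N K : Submodule R M}
    {p : Ideal R} (h : IsRegularPrimeExtIn ⊤ p N K) : K = colonSubmodule N p := by
  have hKC : K ≤ colonSubmodule N p := by
    intro z hz a ha
    have : a ∈ N.colon K := h.1.2.1.2.1 ▸ ha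
    exact Submodule.mem_colon.1 this z hz
  rcases eq_or_lt_of_le hKC with h' | h'
  · exact h'
  · exact absurd h' (h.1.2.2 _ le_top (isRegularPrimeExtIn_colonSubmodule h.2).1.2.1)

end Aux2

section Aux3

variable {R : Type*} [CommRing R] {M : Type*} [AddCommGroup M] [Module R M]

lemma smul_mem_of_span_gen {N : Submodule R M} {S : Finset R} {y : M}
    (h : ∀ b ∈ S, b • y ∈ N) : ∀ b ∈ Ideal.span (S : Set R), b • y ∈ N := by
  intro b hb
  induction hb using Submodule.span_induction with
  | mem z hz => exact h z hz
  | zero => simpa using N.zero_mem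
  | add u v _ _ hu hv => simpa [add_smul] using N.add_mem hu hv
  | smul c u _ hu => rw [smul_eq_mul, mul_smul]; exact N.smul_mem c hu

/-- Associated primes only shrink when passing from `M/N` to `M / colonSubmodule N I`. -/
lemma assOf_colonSubmodule_subset [IsNoetherianRing R] (N : Submodule R M) (I : Ideal R) :
    assOf R (colonSubmodule N I) ⊤ ⊆ assOf R N ⊤ := by
  intro q hq
  obtain ⟨hqp, x, hx⟩ := mem_assOf_iff.1 hq
  obtain ⟨S, hS⟩ := IsNoetherian.noetherian I
  set f : R → Ideal R := fun b => qann N (b • x) with hf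
  have hqle : ∀ b ∈ S, q ≤ f b := by
    intro b hb a ha
    have hbI : b ∈ I := hS ▸ Submodule.subset_span hb
    have : a • x ∈ colonSubmodule N I := mem_qann.1 (show a ∈ qann (colonSubmodule N I) x from hx.symm ▸ ha)
    have := mem_colonSubmodule.1 this b hbI
    rw [hf, mem_qann, smul_comm]
    exact this
  have h1 : q ≤ S.inf f := Finset.le_inf hqle
  have h2 : S.inf f ≤ q := by
    intro a ha
    have hgen : ∀ b ∈ S, b • (a • x) ∈ N := by
      intro b hb
      have hle' : S.inf f ≤ f b := Finset.inf_le hb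
      have : a ∈ f b := hle' ha
      rw [hf, mem_qann] at this
      rwa [smul_comm]
    have : a • x ∈ colonSubmodule N I := by
      intro b hb
      have hb' : b ∈ Ideal.span (S : Set R) := by rw [Ideal.span, hS]; exact hb
      exact smul_mem_of_span_gen hgen b hb'
    exact hx ▸ mem_qann.2 this
  obtain ⟨b, hbS, hble⟩ := hqp.inf_le'.1 h2
  exact mem_assOf_iff.2 ⟨hqp, b • x, le_antisymm hble (hqle b hbS)⟩

/-- A maximal associated prime `p ≠ p₀` survives removing the `p₀`-socle. -/
lemma maximal_assOf_colonSubmodule [IsNoetherianRing R] {N : Submodule R M} {p p₀ : Ideal R}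
    (hp : Maximal (· ∈ assOf R N ⊤) p) (hp₀ : Maximal (· ∈ assOf R N ⊤) p₀) (hne : p ≠ p₀) :
    Maximal (· ∈ assOf R (colonSubmodule N p₀) ⊤) p := by
  obtain ⟨hpp, x, hx⟩ := mem_assOf_iff.1 hp.1
  have hp₀p : ¬ p₀ ≤ p := fun hle => hne (le_antisymm (hp₀.2 hp.1 hle) hle)
  obtain ⟨b, hbp₀, hbp⟩ := SetLike.not_le_iff_exists.1 hp₀p
  have hxC : x ∉ colonSubmodule N p₀ := by
    intro hxC
    exact hp₀p (fun a ha => hx ▸ mem_qann.2 (mem_colonSubmodule.1 hxC a ha))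
  have hq : qann (colonSubmodule N p₀) x = p := by
    apply le_antisymm
    · intro a ha
      have : b • (a • x) ∈ N := mem_colonSubmodule.1 (mem_qann.1 ha) b hbp₀
      have hba : (b * a) • x ∈ N := by rwa [mul_smul]
      have : b * a ∈ p := hx ▸ mem_qann.2 hba
      rcases hpp.mem_or_mem this with h | h
      · exact absurd h hbp
      · exact h
    · intro a ha
      have : a • x ∈ N := mem_qann.1 (hx.symm ▸ ha)
      exact mem_qann.2 (le_colonSubmodule N p₀ this)
  have hmem : p ∈ assOf R (colonSubmodule N p₀) ⊤ := mem_assOf_iff.2 ⟨hpp, x, hq⟩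
  exact ⟨hmem, fun q hq' hle => hp.2 (assOf_colonSubmodule_subset N p₀ hq') hle⟩

end Aux3

section Aux4

variable {R : Type*} [CommRing R] {M : Type*} [AddCommGroup M] [Module R M]

lemma hasGPIF_top_top : HasGPIF (⊤ : Submodule R M) ⊤ (0 : Multiset (Ideal R)) := by
  refine ⟨0, fun _ => ⊤, Fin.elim0, rfl, rfl, fun i => i.elim0, by simp⟩

lemma HasGPIF.eq_zero_of_top {s : Multiset (Ideal R)} (h : HasGPIF (⊤ : Submodule R M) ⊤ s) :
    s = 0 := by
  obtain ⟨n, F, q, h0, hl, hf, hs⟩ := h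
  cases n with
  | zero => simpa using hs.symm
  | succ m =>
    have hlt : F (0 : Fin (m + 1)).castSucc < F (0 : Fin (m + 1)).succ := (hf 0).1.2.1.1
    rw [show ((0 : Fin (m + 1)).castSucc) = (0 : Fin (m + 2)) from rfl, h0] at hlt
    exact absurd hlt not_top_lt

lemma HasGPIF.cons {N K : Submodule R M} {p : Ideal R} {s : Multiset (Ideal R)}
    (hstep : IsRegularPrimeExtIn ⊤ p N K) (h : HasGPIF K ⊤ s) :
    HasGPIF N ⊤ (p ::ₘ s) := by
  obtain ⟨n, F, q, h0, hl, hf, hs⟩ := h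
  refine ⟨n + 1, Fin.cons N F, Fin.cons p q, Fin.cons_zero _ _, ?_, ?_, ?_⟩
  · rw [show (Fin.last (n + 1)) = (Fin.last n).succ from rfl, Fin.cons_succ]
    exact hl
  · intro i
    induction i using Fin.cases with
    | zero => simpa [Fin.cons_succ, h0] using hstep
    | succ j => simpa [Fin.cons_succ, ← Fin.succ_castSucc] using hf j
  · rw [← hs]
    have : List.ofFn (Fin.cons p q : Fin (n+1) → Ideal R) = p :: List.ofFn q := by
      rw [List.ofFn_succ]
      simp [Fin.cons_succ]
    rw [this]
    rfl

lemma HasGPIF.uncons {N : Submodule R M} {s : Multiset (Ideal R)}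
    (h : HasGPIF N ⊤ s) (hN : N ≠ ⊤) :
    ∃ (p : Ideal R) (K : Submodule R M) (t : Multiset (Ideal R)),
      IsRegularPrimeExtIn ⊤ p N K ∧ HasGPIF K ⊤ t ∧ s = p ::ₘ t := by
  obtain ⟨n, F, q, h0, hl, hf, hs⟩ := h
  cases n with
  | zero => exact absurd (h0 ▸ hl ▸ rfl : N = ⊤) hN
  | succ m =>
    refine ⟨q 0, F (Fin.succ 0), List.ofFn (q ∘ Fin.succ), ?_, ?_, ?_⟩
    · have := hf 0
      rwa [show ((0 : Fin (m+1)).castSucc) = (0 : Fin (m+2)) from rfl, h0] at this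
    · refine ⟨m, F ∘ Fin.succ, q ∘ Fin.succ, rfl, ?_, ?_, rfl⟩
      · show F (Fin.last m).succ = ⊤
        rw [Fin.succ_last]
        exact hl
      · intro i
        show IsRegularPrimeExtIn ⊤ (q i.succ) (F i.castSucc.succ) (F i.succ.succ)
        have := hf i.succ
        rwa [← Fin.succ_castSucc] at this
    · rw [← hs, List.ofFn_succ]
      rfl

lemma hasGPIF_mem_assOf_aux [IsNoetherianRing R] :
    ∀ (n : ℕ) (N : Submodule R M) (s : Multiset (Ideal R)), Multiset.card s ≤ n →
      HasGPIF N ⊤ s → ∀ q ∈ s, q ∈ assOf R N ⊤ := by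
  intro n
  induction n with
  | zero =>
    intro N s hcard h q hq
    rw [Multiset.card_eq_zero.1 (Nat.le_zero.1 hcard)] at hq
    simpa using hq
  | succ m ih =>
    intro N s hcard h q hq
    have hN : N ≠ ⊤ := by
      rintro rfl
      rw [h.eq_zero_of_top] at hq
      simpa using hq
    obtain ⟨p₀, K, t, hstep, hK, rfl⟩ := h.uncons hN
    rcases Multiset.mem_cons.1 hq with rfl | hqt
    · exact hstep.2.1
    · have hKC := hstep.eq_colonSubmodule
      have hcard' : Multiset.card t ≤ m := by
        simpa using Nat.succ_le_succ_iff.1 (by simpa using hcard)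
      exact assOf_colonSubmodule_subset N p₀ (ih _ t hcard' (hKC ▸ hK) q hqt)

lemma hasGPIF_mem_assOf [IsNoetherianRing R] {N : Submodule R M} {s : Multiset (Ideal R)}
    (h : HasGPIF N ⊤ s) : ∀ q ∈ s, q ∈ assOf R N ⊤ :=
  hasGPIF_mem_assOf_aux (Multiset.card s) N s le_rfl h

lemma hasGPIF_exchange_aux [IsNoetherianRing R] [DecidableEq (Ideal R)] :
    ∀ (n : ℕ) (N : Submodule R M) (p : Ideal R) (s : Multiset (Ideal R)),
      Multiset.card s ≤ n → Maximal (· ∈ assOf R N ⊤) p → HasGPIF N ⊤ s →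
      p ∈ s ∧ HasGPIF (colonSubmodule N p) ⊤ (s.erase p) := by
  intro n
  induction n with
  | zero =>
    intro N p s hcard hmax h
    rw [Multiset.card_eq_zero.1 (Nat.le_zero.1 hcard)] at h ⊢
    exfalso
    have hN : N = ⊤ := by
      obtain ⟨n, F, q, h0, hl, hf, hs⟩ := h
      cases n with
      | zero => exact h0 ▸ hl ▸ rfl
      | succ m => simpa using congrArg List.length ((Multiset.coe_eq_zero _).1 hs)
    rw [hN, assOf_self_top] at hmax
    exact hmax.1
  | succ m ih =>
    intro N p s hcard hmax h
    have hN : N ≠ ⊤ := by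
      rintro rfl
      rw [assOf_self_top] at hmax
      exact hmax.1
    obtain ⟨p₀, K, t, hstep, hK, rfl⟩ := h.uncons hN
    have hKC := hstep.eq_colonSubmodule
    have hcard' : Multiset.card t ≤ m := Nat.succ_le_succ_iff.1 (by simpa using hcard)
    by_cases hpe : p = p₀
    · subst hpe
      exact ⟨Multiset.mem_cons_self p t, by rwa [Multiset.erase_cons_head, ← hKC]⟩
    · have hmax₀ : Maximal (· ∈ assOf R N ⊤) p₀ := hstep.2
      have hmaxK : Maximal (· ∈ assOf R (colonSubmodule N p₀) ⊤) p :=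
        maximal_assOf_colonSubmodule hmax hmax₀ hpe
      obtain ⟨hpt, hrec⟩ := ih (colonSubmodule N p₀) p t hcard' hmaxK (hKC ▸ hK)
      refine ⟨Multiset.mem_cons_of_mem hpt, ?_⟩
      rw [Multiset.erase_cons_tail t (Ne.symm hpe)]
      have hmaxC : Maximal (· ∈ assOf R (colonSubmodule N p) ⊤) p₀ :=
        maximal_assOf_colonSubmodule hmax₀ hmax (Ne.symm hpe)
      have hstep2 : IsRegularPrimeExtIn ⊤ p₀ (colonSubmodule N p)
          (colonSubmodule (colonSubmodule N p) p₀) :=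
        isRegularPrimeExtIn_colonSubmodule hmaxC
      have hrec' : HasGPIF (colonSubmodule (colonSubmodule N p) p₀) ⊤ (t.erase p) := by
        rw [colonSubmodule_comm]
        exact hrec
      exact hrec'.cons hstep2

lemma HasGPIF.exchange [IsNoetherianRing R] [DecidableEq (Ideal R)] {N : Submodule R M} {p : Ideal R}
    {s : Multiset (Ideal R)} (hmax : Maximal (· ∈ assOf R N ⊤) p) (h : HasGPIF N ⊤ s) :
    p ∈ s ∧ HasGPIF (colonSubmodule N p) ⊤ (s.erase p) :=
  hasGPIF_exchange_aux (Multiset.card s) N p s le_rfl hmax h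

end Aux4

section Aux5

variable {R : Type*} [CommRing R] {M : Type*} [AddCommGroup M] [Module R M]
  {M' : Type*} [AddCommGroup M'] [Module R M']

lemma HasGPIF.eq_top_of_zero {N : Submodule R M} (h : HasGPIF N ⊤ (0 : Multiset (Ideal R))) :
    N = ⊤ := by
  by_contra hN
  obtain ⟨p, K, t, -, -, h0⟩ := h.uncons hN
  simpa using congrArg Multiset.card h0

lemma hasGPIF_top_prod_aux [IsNoetherianRing R] :
    ∀ (n : ℕ) (N' : Submodule R M') (s' : Multiset (Ideal R)), Multiset.card s' ≤ n →
      HasGPIF N' ⊤ s' → HasGPIF ((⊤ : Submodule R M).prod N') ⊤ s' := by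
  intro n
  induction n with
  | zero =>
    intro N' s' hcard h
    rw [Multiset.card_eq_zero.1 (Nat.le_zero.1 hcard)] at h ⊢
    rw [h.eq_top_of_zero, Submodule.prod_top]
    exact hasGPIF_top_top
  | succ m ih =>
    intro N' s' hcard h
    by_cases hN' : N' = ⊤
    · subst hN'
      rw [h.eq_zero_of_top, Submodule.prod_top]
      exact hasGPIF_top_top
    · obtain ⟨p, K, t, hstep, hK, rfl⟩ := h.uncons hN'
      have hcard' : Multiset.card t ≤ m := Nat.succ_le_succ_iff.1 (by simpa using hcard)
      have hmax : Maximal (· ∈ assOf R N' ⊤) p := hstep.2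
      have hmaxP : Maximal (· ∈ assOf R ((⊤ : Submodule R M).prod N') ⊤) p := by
        refine ⟨mem_assOf_prod_iff.2 (Or.inr hmax.1), fun q hq hle => ?_⟩
        rcases mem_assOf_prod_iff.1 hq with hq | hq
        · rw [assOf_self_top] at hq
          exact absurd hq (Set.notMem_empty q)
        · exact hmax.2 hq hle
      have hKC := hstep.eq_colonSubmodule
      have heq : colonSubmodule ((⊤ : Submodule R M).prod N') p
          = (⊤ : Submodule R M).prod K := by
        rw [colonSubmodule_prod, colonSubmodule_top, hKC]
      have hreg := isRegularPrimeExtIn_colonSubmodule hmaxP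
      rw [heq] at hreg
      exact HasGPIF.cons hreg (ih K t hcard' hK)

lemma hasGPIF_prod_top_aux [IsNoetherianRing R] :
    ∀ (n : ℕ) (N : Submodule R M) (s : Multiset (Ideal R)), Multiset.card s ≤ n →
      HasGPIF N ⊤ s → HasGPIF (N.prod (⊤ : Submodule R M')) ⊤ s := by
  intro n
  induction n with
  | zero =>
    intro N s hcard h
    rw [Multiset.card_eq_zero.1 (Nat.le_zero.1 hcard)] at h ⊢
    rw [h.eq_top_of_zero, Submodule.prod_top]
    exact hasGPIF_top_top
  | succ m ih =>
    intro N s hcard h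
    by_cases hN : N = ⊤
    · subst hN
      rw [h.eq_zero_of_top, Submodule.prod_top]
      exact hasGPIF_top_top
    · obtain ⟨p, K, t, hstep, hK, rfl⟩ := h.uncons hN
      have hcard' : Multiset.card t ≤ m := Nat.succ_le_succ_iff.1 (by simpa using hcard)
      have hmax : Maximal (· ∈ assOf R N ⊤) p := hstep.2
      have hmaxP : Maximal (· ∈ assOf R (N.prod (⊤ : Submodule R M')) ⊤) p := by
        refine ⟨mem_assOf_prod_iff.2 (Or.inl hmax.1), fun q hq hle => ?_⟩
        rcases mem_assOf_prod_iff.1 hq with hq | hq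
        · exact hmax.2 hq hle
        · rw [assOf_self_top] at hq
          exact absurd hq (Set.notMem_empty q)
      have hKC := hstep.eq_colonSubmodule
      have heq : colonSubmodule (N.prod (⊤ : Submodule R M')) p
          = K.prod (⊤ : Submodule R M') := by
        rw [colonSubmodule_prod, colonSubmodule_top, hKC]
      have hreg := isRegularPrimeExtIn_colonSubmodule hmaxP
      rw [heq] at hreg
      exact HasGPIF.cons hreg (ih K t hcard' hK)

lemma hasGPIF_merge_aux [IsNoetherianRing R] [DecidableEq (Ideal R)] :
    ∀ (n : ℕ) (N : Submodule R M) (N' : Submodule R M') (s s' : Multiset (Ideal R)),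
      Multiset.card s + Multiset.card s' ≤ n →
      HasGPIF N ⊤ s → HasGPIF N' ⊤ s' →
      HasGPIF (N.prod N') ⊤ (s ∪ s') := by
  intro n
  induction n with
  | zero =>
    intro N N' s s' hcard h h'
    have hs : s = 0 := Multiset.card_eq_zero.1 (by omega)
    have hs' : s' = 0 := Multiset.card_eq_zero.1 (by omega)
    subst hs hs'
    rw [(h.eq_top_of_zero), (h'.eq_top_of_zero), Multiset.union_zero, Submodule.prod_top]
    exact hasGPIF_top_top
  | succ m ih =>
    intro N N' s s' hcard h h'
    by_cases hN : N = ⊤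
    · subst hN
      rw [h.eq_zero_of_top, Multiset.zero_union]
      exact hasGPIF_top_prod_aux (Multiset.card s') N' s' le_rfl h'
    by_cases hN' : N' = ⊤
    · subst hN'
      rw [h'.eq_zero_of_top, Multiset.union_zero]
      exact hasGPIF_prod_top_aux (Multiset.card s) N s le_rfl h
    -- both proper: pick a maximal associated prime of the product
    obtain ⟨q0, hq0⟩ := assOf_nonempty hN
    have hUne : (assOf R (N.prod N') ⊤).Nonempty :=
      ⟨q0, mem_assOf_prod_iff.2 (Or.inl hq0)⟩
    obtain ⟨p, hpU, hpmax⟩ :=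
      (set_has_maximal_iff_noetherian.mpr (inferInstance : IsNoetherian R R))
        (assOf R (N.prod N') ⊤) hUne
    have hmaxU : Maximal (· ∈ assOf R (N.prod N') ⊤) p :=
      ⟨hpU, fun q hq hle => (eq_of_le_of_not_lt hle (hpmax q hq)).ge⟩
    have hmaxof : p ∈ assOf R N ⊤ → Maximal (· ∈ assOf R N ⊤) p := fun hm =>
      ⟨hm, fun q hq hle => hmaxU.2 (mem_assOf_prod_iff.2 (Or.inl hq)) hle⟩
    have hmaxof' : p ∈ assOf R N' ⊤ → Maximal (· ∈ assOf R N' ⊤) p := fun hm =>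
      ⟨hm, fun q hq hle => hmaxU.2 (mem_assOf_prod_iff.2 (Or.inr hq)) hle⟩
    have hreg := isRegularPrimeExtIn_colonSubmodule hmaxU
    rw [colonSubmodule_prod] at hreg
    by_cases hin : p ∈ assOf R N ⊤ <;> by_cases hin' : p ∈ assOf R N' ⊤
    · -- p associated on both sides
      obtain ⟨hps, hrec⟩ := h.exchange (hmaxof hin)
      obtain ⟨hps', hrec'⟩ := h'.exchange (hmaxof' hin')
      have hc1 : 0 < Multiset.card s := Multiset.card_pos_iff_exists_mem.2 ⟨p, hps⟩
      have hc1' : 0 < Multiset.card s' := Multiset.card_pos_iff_exists_mem.2 ⟨p, hps'⟩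
      have hcc : Multiset.card (s.erase p) + Multiset.card (s'.erase p) ≤ m := by
        rw [Multiset.card_erase_of_mem hps, Multiset.card_erase_of_mem hps']
        simp only [Nat.pred_eq_sub_one]
        omega
      have hmerged := ih _ _ _ _ hcc hrec hrec'
      have hfinal := hmerged.cons hreg
      have hms : p ::ₘ (s.erase p ∪ s'.erase p) = s ∪ s' := by
        ext a
        by_cases hap : a = p
        · subst hap
          have := Multiset.count_pos.2 hps
          have := Multiset.count_pos.2 hps'
          rw [Multiset.count_cons_self, Multiset.count_union, Multiset.count_union,
            Multiset.count_erase_self, Multiset.count_erase_self]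
          omega
        · rw [Multiset.count_cons_of_ne hap, Multiset.count_union, Multiset.count_union,
            Multiset.count_erase_of_ne hap, Multiset.count_erase_of_ne hap]
      rwa [hms] at hfinal
    · -- p associated only on the left
      obtain ⟨hps, hrec⟩ := h.exchange (hmaxof hin)
      have hC' : colonSubmodule N' p = N' :=
        colonSubmodule_eq_self (fun q hq hle => hmaxU.2 (mem_assOf_prod_iff.2 (Or.inr hq)) hle)
          hin'
      rw [hC'] at hreg
      have hps' : p ∉ s' := fun hmem => hin' (hasGPIF_mem_assOf h' p hmem)
      have hc1 : 0 < Multiset.card s := Multiset.card_pos_iff_exists_mem.2 ⟨p, hps⟩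
      have hcc : Multiset.card (s.erase p) + Multiset.card s' ≤ m := by
        rw [Multiset.card_erase_of_mem hps]
        simp only [Nat.pred_eq_sub_one]
        omega
      have hmerged := ih _ _ _ _ hcc hrec h'
      have hfinal := hmerged.cons hreg
      have hms : p ::ₘ (s.erase p ∪ s') = s ∪ s' := by
        ext a
        by_cases hap : a = p
        · subst hap
          have := Multiset.count_pos.2 hps
          have h0' : Multiset.count a s' = 0 := Multiset.count_eq_zero.2 hps'
          rw [Multiset.count_cons_self, Multiset.count_union, Multiset.count_union,
            Multiset.count_erase_self, h0']
          omega
        · rw [Multiset.count_cons_of_ne hap, Multiset.count_union, Multiset.count_union,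
            Multiset.count_erase_of_ne hap]
      rwa [hms] at hfinal
    · -- p associated only on the right
      obtain ⟨hps', hrec'⟩ := h'.exchange (hmaxof' hin')
      have hC : colonSubmodule N p = N :=
        colonSubmodule_eq_self (fun q hq hle => hmaxU.2 (mem_assOf_prod_iff.2 (Or.inl hq)) hle)
          hin
      rw [hC] at hreg
      have hps : p ∉ s := fun hmem => hin (hasGPIF_mem_assOf h p hmem)
      have hc1' : 0 < Multiset.card s' := Multiset.card_pos_iff_exists_mem.2 ⟨p, hps'⟩
      have hcc : Multiset.card s + Multiset.card (s'.erase p) ≤ m := by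
        rw [Multiset.card_erase_of_mem hps']
        simp only [Nat.pred_eq_sub_one]
        omega
      have hmerged := ih _ _ _ _ hcc h hrec'
      have hfinal := hmerged.cons hreg
      have hms : p ::ₘ (s ∪ s'.erase p) = s ∪ s' := by
        ext a
        by_cases hap : a = p
        · subst hap
          have := Multiset.count_pos.2 hps'
          have h0 : Multiset.count a s = 0 := Multiset.count_eq_zero.2 hps
          rw [Multiset.count_cons_self, Multiset.count_union, Multiset.count_union,
            Multiset.count_erase_self, h0]
          omega
        · rw [Multiset.count_cons_of_ne hap, Multiset.count_union, Multiset.count_union,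
            Multiset.count_erase_of_ne hap]
      rwa [hms] at hfinal
    · exact absurd (mem_assOf_prod_iff.1 hpU) (by simp [hin, hin'])

lemma hasGPIF_merge [IsNoetherianRing R] [DecidableEq (Ideal R)] {N : Submodule R M}
    {N' : Submodule R M'} {s s' : Multiset (Ideal R)}
    (h : HasGPIF N ⊤ s) (h' : HasGPIF N' ⊤ s') :
    HasGPIF (N.prod N') ⊤ (s ∪ s') :=
  hasGPIF_merge_aux (Multiset.card s + Multiset.card s') N N' s s' le_rfl h h'

end Aux5
/-- If `P_M(N) = p₁^{r₁}⋯p_k^{s_k}` and `P_{M'}(N') = p₁^{s₁}⋯p_k^{s_k}` with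
`rᵢ + sᵢ > 0`, then `P_{M ⊕ M'}(N ⊕ N') = p₁^{t₁}⋯p_k^{t_k}` with `tᵢ = max rᵢ sᵢ`. -/
theorem gpif_prod_max {R : Type*} [CommRing R] [IsNoetherianRing R]
    {M : Type*} [AddCommGroup M] [Module R M] [Module.Finite R M]
    {M' : Type*} [AddCommGroup M'] [Module R M'] [Module.Finite R M']
    {k : ℕ} (p : Fin k → Ideal R) (hprime : ∀ i, (p i).IsPrime)
    (hdist : Function.Injective p) (r s : Fin k → ℕ) (hrs : ∀ i, 0 < r i + s i)
    (N : Submodule R M) (hN : N ≠ ⊤) (N' : Submodule R M') (hN' : N' ≠ ⊤)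
    (h : HasGPIF N ⊤ (∑ i, Multiset.replicate (r i) (p i)))
    (h' : HasGPIF N' ⊤ (∑ i, Multiset.replicate (s i) (p i))) :
    HasGPIF (N.prod N') ⊤ (∑ i, Multiset.replicate (max (r i) (s i)) (p i)) := by
  classical
  have hm := hasGPIF_merge h h'
  have hms : (∑ i, Multiset.replicate (r i) (p i)) ∪ (∑ i, Multiset.replicate (s i) (p i))
      = ∑ i, Multiset.replicate (max (r i) (s i)) (p i) := by
    ext a
    rw [Multiset.count_union]
    simp only [Multiset.count_sum', Multiset.count_replicate]
    by_cases ha : ∃ i, a = p i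
    · obtain ⟨i₀, rfl⟩ := ha
      have key : ∀ f : Fin k → ℕ,
          (∑ i, if p i = p i₀ then f i else 0) = f i₀ := by
        intro f
        rw [Finset.sum_eq_single i₀]
        · rw [if_pos rfl]
        · intro j _ hj
          exact if_neg fun e => hj (hdist e)
        · intro hi₀
          exact absurd (Finset.mem_univ i₀) hi₀
      rw [key r, key s, key (fun i => max (r i) (s i))]
    · push_neg at ha
      have : ∀ f : Fin k → ℕ, (∑ i, if p i = a then f i else 0) = 0 := fun f =>
        Finset.sum_eq_zero fun i _ => if_neg fun e => ha i e.symm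
      rw [this r, this s, this (fun i => max (r i) (s i))]
      simp
  rwa [hms] at hm
end

section
/- Let R be a commutative Noetherian ring and N₁ ⊆ M₁, …, Nₙ ⊆ Mₙ proper submodules of finitely generated R-modules with P_{M_i}(N_i) = p₁^{r_{i1}}⋯p_k^{r_{ik}} (r_{ij} ≥ 0) for distinct primes p₁, …, p_k. Then P_{⊕ᵢ M_i}(⊕ᵢ N_i) = p₁^{s₁}⋯p_k^{s_k}, where s_j = max{r_{1j}, …, r_{nj}}. -/
variable {R : Type*} [CommRing R] {M : Type*} [AddCommGroup M] [Module R M]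

namespace GPIF


lemma mem_colon {N : Submodule R M} {I : Ideal R} {x : M} :
    x ∈ colonSubmodule N I ↔ ∀ a ∈ I, a • x ∈ N := Iff.rfl

lemma le_colon (N : Submodule R M) (I : Ideal R) : N ≤ colonSubmodule N I :=
  fun x hx a _ => N.smul_mem a hx

lemma colon_mul (N : Submodule R M) (I J : Ideal R) :
    colonSubmodule N (I * J) = colonSubmodule (colonSubmodule N I) J := by
  ext x
  constructor
  · intro hx b hb a ha
    rw [← mul_smul]
    exact hx _ (Ideal.mul_mem_mul ha hb)
  · intro hx c hc
    refine Submodule.mul_induction_on hc (fun a ha b hb => ?_) (fun y z h1 h2 => ?_)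
    · rw [mul_smul]; exact hx b hb a ha
    · rw [add_smul]; exact N.add_mem h1 h2

/-- The annihilator of the class of `x` in `M ⧸ N`. -/
def annq (N : Submodule R M) (x : M) : Ideal R := (R ∙ (N.mkQ x)).annihilator

lemma mem_annq {N : Submodule R M} {x : M} {r : R} :
    r ∈ annq N x ↔ r • x ∈ N := by
  rw [annq, Submodule.mem_annihilator_span_singleton, ← map_smul]
  rw [show N.mkQ (r • x) = Submodule.Quotient.mk (r • x) from rfl,
    Submodule.Quotient.mk_eq_zero]

lemma annq_ne_top {N : Submodule R M} {x : M} (hx : x ∉ N) : annq N x ≠ ⊤ := by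
  intro h
  have h1 : (1:R) ∈ annq N x := h ▸ Submodule.mem_top
  rw [mem_annq, one_smul] at h1
  exact hx h1

lemma annq_eq_colon (N : Submodule R M) (x : M) :
    annq N x = (⊥ : Submodule R (M ⧸ N)).colon {N.mkQ x} := by
  ext r
  rw [annq, Submodule.mem_annihilator_span_singleton, Submodule.mem_colon_singleton,
    Submodule.mem_bot]

lemma isAssociatedPrime_quot_iff [IsNoetherianRing R] {N : Submodule R M} {q : Ideal R} :
    IsAssociatedPrime q (M ⧸ N) ↔ q.IsPrime ∧ ∃ x : M, q = annq N x := by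
  rw [isAssociatedPrime_iff]
  constructor
  · rintro ⟨hq, y, hy⟩
    obtain ⟨x, rfl⟩ := N.mkQ_surjective y
    exact ⟨hq, x, hy.trans (annq_eq_colon N x).symm⟩
  · rintro ⟨hq, x, hx⟩
    exact ⟨hq, N.mkQ x, hx.trans (annq_eq_colon N x)⟩

/-- An existence lemma: any proper annihilator `annq` is contained in an associated prime. -/
lemma exists_ass_le [IsNoetherianRing R] {N : Submodule R M} {x : M} (hx : x ∉ N) :
    ∃ q ∈ associatedPrimes R (M ⧸ N), annq N x ≤ q := by
  have hx' : N.mkQ x ≠ 0 := by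
    simpa [Submodule.Quotient.mk_eq_zero] using hx
  obtain ⟨q, hq, hle⟩ := exists_le_isAssociatedPrime_of_isNoetherianRing R (N.mkQ x) hx'
  exact ⟨q, hq, by rw [annq_eq_colon]; exact hle⟩

/-- `Ok p N` : `p` is a maximal associated prime of `M ⧸ N`. -/
def Ok (p : Ideal R) (N : Submodule R M) : Prop :=
  Maximal (· ∈ associatedPrimes R (M ⧸ N)) p

lemma Ok.mem {p : Ideal R} {N : Submodule R M} (h : Ok p N) :
    IsAssociatedPrime p (M ⧸ N) := h.1

lemma not_ok_top (p : Ideal R) : ¬ Ok p (⊤ : Submodule R M) := by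
  intro h
  have : Subsingleton (M ⧸ (⊤ : Submodule R M)) :=
    Submodule.Quotient.subsingleton_iff.mpr rfl
  exact not_isAssociatedPrime_of_subsingleton h.mem




lemma assOf_top_eq (N : Submodule R M) :
    assOf R N ⊤ = associatedPrimes R (M ⧸ N) := by
  unfold assOf
  have h1 : (⊤ : Submodule R M).map N.mkQ = ⊤ := by
    rw [Submodule.map_top, Submodule.range_mkQ]
  rw [h1]
  exact LinearEquiv.AssociatedPrimes.eq (Submodule.topEquiv (R := R) (M := M ⧸ N))

section OkLemmas

variable [IsNoetherianRing R] {p : Ideal R} {N : Submodule R M}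

lemma Ok.exists_witness (h : Ok p N) : ∃ x : M, x ∉ N ∧ p = annq N x := by
  obtain ⟨hp, x, hx⟩ := isAssociatedPrime_quot_iff.mp h.mem
  refine ⟨x, fun hxN => ?_, hx⟩
  have : annq N x = ⊤ := by
    rw [Ideal.eq_top_iff_one, mem_annq, one_smul]; exact hxN
  exact hp.ne_top (hx.trans this)

lemma Ok.lt_colon (h : Ok p N) : N < colonSubmodule N p := by
  obtain ⟨x, hxN, hx⟩ := h.exists_witness
  refine lt_of_le_of_ne (le_colon N p) fun he => hxN ?_
  have : x ∈ colonSubmodule N p := fun a ha => mem_annq.mp (hx ▸ ha)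
  rwa [← he] at this

lemma Ok.colon_ideal (h : Ok p N) : N.colon (colonSubmodule N p) = p := by
  obtain ⟨x, hxN, hx⟩ := h.exists_witness
  apply le_antisymm
  · intro a ha
    rw [Submodule.mem_colon] at ha
    have hxc : x ∈ colonSubmodule N p := fun b hb => mem_annq.mp (hx ▸ hb)
    rw [hx]; exact mem_annq.mpr (ha x hxc)
  · intro a ha
    rw [Submodule.mem_colon]
    exact fun y hy => hy a ha

lemma Ok.prime_cond (h : Ok p N) :
    ∀ a : R, ∀ x ∈ colonSubmodule N p, a • x ∈ N → x ∈ N ∨ a ∈ p := by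
  intro a x hxc hax
  by_cases hxN : x ∈ N
  · exact Or.inl hxN
  right
  obtain ⟨q, hq, hle⟩ := exists_ass_le hxN
  have hpq : p ≤ annq N x := fun b hb => mem_annq.mpr (hxc b hb)
  have : q = p := le_antisymm (h.2 hq (hpq.trans hle)) (hpq.trans hle)
  exact this ▸ hle (mem_annq.mpr hax)

lemma Ok.isPrimeExt (h : Ok p N) : IsPrimeExt p N (colonSubmodule N p) :=
  ⟨h.lt_colon, h.colon_ideal, h.prime_cond⟩

lemma le_colon_of_isPrimeExt {K : Submodule R M} (h : IsPrimeExt p N K) :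
    K ≤ colonSubmodule N p := by
  intro x hx a ha
  rw [← h.2.1] at ha
  rw [Submodule.mem_colon] at ha
  exact ha x hx

lemma isRegularPrimeExtIn_iff {K : Submodule R M} :
    IsRegularPrimeExtIn ⊤ p N K ↔ Ok p N ∧ K = colonSubmodule N p := by
  constructor
  · rintro ⟨⟨-, hK, hmax⟩, hM⟩
    have hOk : Ok p N := by rwa [Ok, ← assOf_top_eq]
    refine ⟨hOk, ?_⟩
    have h1 : K ≤ colonSubmodule N p := le_colon_of_isPrimeExt hK
    have h2 := hmax (colonSubmodule N p) le_top hOk.isPrimeExt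
    exact le_antisymm h1 (by by_contra hc; exact h2 (lt_of_le_of_ne h1 (fun e => hc e.ge)))
  · rintro ⟨hOk, rfl⟩
    refine ⟨⟨le_top, hOk.isPrimeExt, fun L _ hL hlt => ?_⟩, by rwa [Ok, ← assOf_top_eq] at hOk⟩
    exact (lt_irrefl _ (lt_of_lt_of_le hlt (le_colon_of_isPrimeExt hL)))

/-- Descent: associated primes after a colon step lie below old associated primes. -/
lemma exists_ass_le_of_colon {I : Ideal R} {q : Ideal R}
    (hq : IsAssociatedPrime q (M ⧸ colonSubmodule N I)) :
    ∃ q' ∈ associatedPrimes R (M ⧸ N), q ≤ q' := by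
  obtain ⟨hqp, y, hy⟩ := isAssociatedPrime_quot_iff.mp hq
  have hyN : y ∉ colonSubmodule N I := by
    intro hc
    have : annq (colonSubmodule N I) y = ⊤ := by
      rw [Ideal.eq_top_iff_one, mem_annq, one_smul]; exact hc
    exact hqp.ne_top (hy.trans this)
  have hex : ∃ a ∈ I, a • y ∉ N := by
    by_contra hc
    push_neg at hc
    exact hyN fun a ha => hc a ha
  obtain ⟨a, ha, hz⟩ := hex
  obtain ⟨q', hq', hle⟩ := exists_ass_le hz
  refine ⟨q', hq', fun b hb => hle (mem_annq.mpr ?_)⟩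
  have : b • y ∈ colonSubmodule N I := mem_annq.mp (hy ▸ hb)
  have := this a ha
  rwa [smul_comm] at this

/-- Confluence: if `p ≠ q` are both maximal associated primes, `q` stays maximal after `p`. -/
lemma Ok.ok_colon {q : Ideal R} (hp : Ok p N) (hq : Ok q N) (hne : p ≠ q) :
    Ok q (colonSubmodule N p) := by
  have hpq : ¬ p ≤ q := fun hle => hne (le_antisymm hle (hp.2 hq.mem hle))
  obtain ⟨a, hap, haq⟩ := SetLike.not_le_iff_exists.mp hpq
  obtain ⟨x, hxN, hx⟩ := hq.exists_witness
  have hqprime : q.IsPrime := hq.mem.isPrime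
  constructor
  · show q ∈ associatedPrimes R (M ⧸ colonSubmodule N p)
    rw [AssociatedPrimes.mem_iff, isAssociatedPrime_quot_iff]
    refine ⟨hqprime, x, le_antisymm ?_ ?_⟩
    · intro b hb
      rw [mem_annq]
      intro c hc
      exact Submodule.smul_mem _ c (mem_annq.mp (hx ▸ hb))
    · intro b hb
      rw [mem_annq] at hb
      have : (a * b) • x ∈ N := by rw [mul_smul]; exact hb a hap
      have : a * b ∈ q := hx ▸ mem_annq.mpr this
      exact (hqprime.mem_or_mem this).resolve_left haq
  · intro q' hq' hle
    obtain ⟨q'', hq'', hle''⟩ := exists_ass_le_of_colon hq'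
    have : q'' ≤ q := hq.2 hq'' (hle.trans hle'')
    exact hle''.trans this

/-- If `q` is maximal in a superset of `Ass(M/N)` and `q ∉ Ass(M/N)`, colon does nothing. -/
lemma colon_eq_self_of_not_ass {q : Ideal R} (S : Set (Ideal R))
    (hS : associatedPrimes R (M ⧸ N) ⊆ S) (hmax : Maximal (· ∈ S) q)
    (hq : q ∉ associatedPrimes R (M ⧸ N)) : colonSubmodule N q = N := by
  refine le_antisymm ?_ (le_colon N q)
  intro x hx
  by_contra hxN
  obtain ⟨q', hq', hle⟩ := exists_ass_le hxN
  have h1 : q ≤ q' := fun b hb => hle (mem_annq.mpr (hx b hb))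
  have : q' ≤ q := hmax.2 (hS hq') h1
  exact hq ((le_antisymm this h1) ▸ hq')

end OkLemmas




inductive Reaches : Submodule R M → Multiset (Ideal R) → Prop
  | top : Reaches ⊤ 0
  | step {N : Submodule R M} {p : Ideal R} {s : Multiset (Ideal R)} :
      Ok p N → Reaches (colonSubmodule N p) s → Reaches N (p ::ₘ s)

variable [IsNoetherianRing R]

lemma exists_ok {N : Submodule R M} (hN : N ≠ ⊤) : ∃ p, Ok p N := by
  have : Nontrivial (M ⧸ N) := Submodule.Quotient.nontrivial_iff.mpr hN
  have hne := associatedPrimes.nonempty R (M ⧸ N)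
  obtain ⟨p, hp, hmax⟩ := (set_has_maximal_iff_noetherian.mpr inferInstance)
    (associatedPrimes R (M ⧸ N)) hne
  refine ⟨p, hp, fun q hq hle => ?_⟩
  by_contra hnle
  exact hmax q hq (lt_of_le_not_ge hle hnle)

lemma exists_reaches [IsNoetherian R M] (N : Submodule R M) : ∃ s, Reaches N s := by
  induction N using WellFoundedGT.induction with
  | _ N ih =>
    by_cases hN : N = ⊤
    · exact ⟨0, hN ▸ Reaches.top⟩
    · obtain ⟨p, hp⟩ := exists_ok hN
      obtain ⟨s, hs⟩ := ih _ hp.lt_colon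
      exact ⟨p ::ₘ s, Reaches.step hp hs⟩

lemma Reaches.mem_le {N : Submodule R M} {s : Multiset (Ideal R)} (h : Reaches N s) :
    ∀ q ∈ s, ∃ q' ∈ associatedPrimes R (M ⧸ N), q ≤ q' := by
  induction h with
  | top => intro q hq; simp at hq
  | step hp _ ih =>
    intro q hq
    rcases Multiset.mem_cons.mp hq with rfl | hq
    · exact ⟨q, hp.mem, le_rfl⟩
    · obtain ⟨q', hq', hle⟩ := ih q hq
      obtain ⟨q'', hq'', hle'⟩ := exists_ass_le_of_colon hq'
      exact ⟨q'', hq'', hle.trans hle'⟩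

lemma Reaches.eq_top_of_zero {N : Submodule R M} {s : Multiset (Ideal R)}
    (h : Reaches N s) (hs : s = 0) : N = ⊤ := by
  induction h with
  | top => rfl
  | step _ _ _ => simp at hs

lemma reaches_top {t : Multiset (Ideal R)} (h : Reaches (⊤ : Submodule R M) t) : t = 0 := by
  cases h with
  | top => rfl
  | step hq _ => exact absurd hq (not_ok_top _)

lemma reaches_unique_aux [IsNoetherian R M] (c : ℕ) :
    ∀ (N : Submodule R M) (s t : Multiset (Ideal R)),
      s.card ≤ c → Reaches N s → Reaches N t → s = t := by
  induction c with
  | zero =>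
    intro N s t hc hs ht
    have hs0 : s = 0 := Multiset.card_eq_zero.mp (Nat.le_zero.mp hc)
    have hN : N = ⊤ := hs.eq_top_of_zero hs0
    subst hN
    rw [hs0, (reaches_top ht)]
  | succ c ih =>
    intro N s t hc hs ht
    cases hs with
    | top => rw [reaches_top ht]
    | @step _ p s' hp hs' =>
      cases ht with
      | top => exact absurd hp (not_ok_top _)
      | @step _ q t' hq ht' =>
        have hcard : s'.card ≤ c := by
          simp only [Multiset.card_cons] at hc; omega
        by_cases hpq : p = q
        · subst hpq
          rw [ih _ s' t' hcard hs' ht']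
        · obtain ⟨u, hu⟩ := exists_reaches (colonSubmodule N (p * q))
          have hu1 : Reaches (colonSubmodule (colonSubmodule N p) q) u :=
            colon_mul N p q ▸ hu
          have hu2 : Reaches (colonSubmodule (colonSubmodule N q) p) u := by
            have : colonSubmodule N (q * p) = colonSubmodule (colonSubmodule N q) p :=
              colon_mul N q p
            rw [← this, mul_comm q p]
            exact hu
          have h1 : Reaches (colonSubmodule N p) (q ::ₘ u) :=
            Reaches.step (hp.ok_colon hq hpq) hu1
          have h2 : Reaches (colonSubmodule N q) (p ::ₘ u) :=
            Reaches.step (hq.ok_colon hp (Ne.symm hpq)) hu2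
          have e1 : s' = q ::ₘ u := ih _ s' (q ::ₘ u) hcard hs' h1
          have hcard2 : (p ::ₘ u).card ≤ c := by
            have : s'.card = u.card + 1 := by rw [e1, Multiset.card_cons]
            simp only [Multiset.card_cons]
            omega
          have e2 : p ::ₘ u = t' := ih _ (p ::ₘ u) t' hcard2 h2 ht'
          rw [e1, ← e2, Multiset.cons_swap]

lemma Reaches.unique [IsNoetherian R M] {N : Submodule R M} {s t : Multiset (Ideal R)}
    (hs : Reaches N s) (ht : Reaches N t) : s = t :=
  reaches_unique_aux s.card N s t le_rfl hs ht

lemma hasGPIF_top_iff {N : Submodule R M} {s : Multiset (Ideal R)} :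
    HasGPIF N ⊤ s ↔ Reaches N s := by
  constructor
  · rintro ⟨n, F, p, h0, hl, hf, hs⟩
    subst hs h0
    induction n with
    | zero =>
      have : F 0 = ⊤ := by rw [show (0 : Fin 1) = Fin.last 0 from rfl, hl]
      rw [this]
      simpa using Reaches.top
    | succ n ih =>
      have h00 := hf 0
      rw [isRegularPrimeExtIn_iff] at h00
      have hstep : F ((0 : Fin (n+1)).succ) = colonSubmodule (F 0) (p 0) := by
        simpa using h00.2
      have htail : Reaches (F ((0 : Fin (n+1)).succ)) (↑(List.ofFn (p ∘ Fin.succ))) := by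
        refine ih (F ∘ Fin.succ) (p ∘ Fin.succ) ?_ ?_
        · show F ((Fin.last n).succ) = ⊤
          rw [Fin.succ_last]
          exact hl
        · intro i
          have := hf i.succ
          simpa only [Function.comp_apply, Fin.succ_castSucc] using this
      rw [hstep] at htail
      have : (↑(List.ofFn p) : Multiset (Ideal R)) = p 0 ::ₘ ↑(List.ofFn (p ∘ Fin.succ)) := by
        rw [List.ofFn_succ]; rfl
      rw [this]
      exact Reaches.step h00.1 htail
  · intro h
    induction h with
    | top =>
      exact ⟨0, fun _ => ⊤, Fin.elim0, rfl, rfl, fun i => i.elim0, by simp⟩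
    | @step N p s hp _ ih =>
      obtain ⟨n, F, q, h0, hl, hf, hs⟩ := ih
      refine ⟨n + 1, Fin.cases N F, Fin.cases p q, by simp, ?_, ?_, ?_⟩
      · rw [show Fin.last (n + 1) = (Fin.last n).succ from (Fin.succ_last n).symm]
        simp only [Fin.cases_succ]; exact hl
      · intro i
        induction i using Fin.cases with
        | zero =>
          have e1 : (Fin.cases N F : ∀ _ : Fin (n+2), Submodule R M)
              ((0 : Fin (n+1)).succ) = colonSubmodule N p := by
            simp only [Fin.cases_succ]; exact h0
          simp only [Fin.castSucc_zero, Fin.cases_zero, e1]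
          exact isRegularPrimeExtIn_iff.mpr ⟨hp, rfl⟩
        | succ j =>
          have e1 : (Fin.cases N F : ∀ _ : Fin (n+2), Submodule R M)
              (j.succ.castSucc) = F j.castSucc := by
            rw [← Fin.succ_castSucc]; simp
          have e2 : (Fin.cases N F : ∀ _ : Fin (n+2), Submodule R M)
              (j.succ.succ) = F j.succ := by simp
          have e3 : (Fin.cases p q : ∀ _ : Fin (n+1), Ideal R) j.succ = q j := by simp
          rw [e1, e2, e3]
          exact hf j
      · have e : List.ofFn (Fin.cases p q : ∀ _ : Fin (n+1), Ideal R) =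
            p :: List.ofFn q := by
          rw [List.ofFn_succ]
          simp
        rw [e, ← hs]
        rfl




section Pi

variable {ι : Type*} [Fintype ι] [DecidableEq ι] {X : ι → Type*}
  [∀ i, AddCommGroup (X i)] [∀ i, Module R (X i)]

lemma colon_pi (G : ∀ i, Submodule R (X i)) (q : Ideal R) :
    colonSubmodule (Submodule.pi Set.univ G) q
      = Submodule.pi Set.univ (fun i => colonSubmodule (G i) q) := by
  ext x
  constructor
  · intro h
    refine Submodule.mem_pi.mpr fun i _ => ?_
    intro a ha
    exact Submodule.mem_pi.mp (h a ha) i (Set.mem_univ i)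
  · intro h
    intro a ha
    refine Submodule.mem_pi.mpr fun i _ => ?_
    exact Submodule.mem_pi.mp h i (Set.mem_univ i) a ha

lemma associatedPrimes_pi :
    associatedPrimes R (∀ i, X i) = ⋃ i, associatedPrimes R (X i) := by
  apply le_antisymm
  · intro q hq'
    obtain ⟨hq, x, hx⟩ := isAssociatedPrime_iff.mp hq'
    have hprod : (∏ i, (R ∙ x i).annihilator) ≤ q := by
      refine le_trans Ideal.prod_le_inf ?_
      rw [hx]
      intro r hr
      rw [Submodule.mem_colon_singleton, Submodule.mem_bot]
      ext i
      have hinf : Finset.univ.inf (fun i => (R ∙ x i).annihilator) ≤ (R ∙ x i).annihilator :=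
        Finset.inf_le (Finset.mem_univ i)
      have : r ∈ (R ∙ x i).annihilator := hinf hr
      rw [Submodule.mem_annihilator_span_singleton] at this
      simpa using this
    obtain ⟨i, -, hle⟩ := (hq.prod_le).mp hprod
    have hge : q ≤ (R ∙ x i).annihilator := by
      intro r hr
      rw [Submodule.mem_annihilator_span_singleton]
      have : r • x = 0 := by
        have := hx ▸ hr
        rwa [Submodule.mem_colon_singleton, Submodule.mem_bot] at this
      exact congrFun this i
    have heq : (R ∙ x i).annihilator = (⊥ : Submodule R (X i)).colon {x i} := by
      ext r
      rw [Submodule.mem_annihilator_span_singleton, Submodule.mem_colon_singleton,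
        Submodule.mem_bot]
    exact Set.mem_iUnion.mpr ⟨i, isAssociatedPrime_iff.mpr
      ⟨hq, x i, by rw [← heq]; exact le_antisymm hge hle⟩⟩
  · intro q hq
    obtain ⟨i, hqi⟩ := Set.mem_iUnion.mp hq
    exact associatedPrimes.subset_of_injective (f := LinearMap.single R X i)
      (fun a b hab => by simpa using congrFun hab i) hqi

lemma associatedPrimes_pi_quot (G : ∀ i, Submodule R (X i)) :
    associatedPrimes R ((∀ i, X i) ⧸ Submodule.pi Set.univ G)
      = ⋃ i, associatedPrimes R (X i ⧸ G i) := by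
  rw [LinearEquiv.AssociatedPrimes.eq (Submodule.quotientPi G), associatedPrimes_pi]

lemma pi_eq_top_iff {G : ∀ i, Submodule R (X i)} :
    Submodule.pi Set.univ G = ⊤ ↔ ∀ i, G i = ⊤ := by
  constructor
  · intro h i
    rw [eq_top_iff]
    intro y _
    have : Pi.single i y ∈ Submodule.pi Set.univ G := h ▸ Submodule.mem_top
    have := Submodule.mem_pi.mp this i (Set.mem_univ i)
    simpa using this
  · intro h
    rw [eq_top_iff]
    intro y _
    exact Submodule.mem_pi.mpr fun i _ => (h i) ▸ Submodule.mem_top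

end Pi

section Count

variable [DecidableEq (Ideal R)] {k : ℕ} {p : Fin k → Ideal R}

lemma count_sum_replicate (hdist : Function.Injective p) (m : Fin k → ℕ) (j' : Fin k) :
    (∑ j, Multiset.replicate (m j) (p j)).count (p j') = m j' := by
  rw [Multiset.count_sum']
  rw [Finset.sum_eq_single j']
  · simp [Multiset.count_replicate]
  · intro j _ hj
    rw [Multiset.count_replicate, if_neg (fun e => hj (hdist e))]
  · simp

lemma count_sum_replicate_of_notmem {a : Ideal R} (ha : a ∉ Set.range p) (m : Fin k → ℕ) :
    (∑ j, Multiset.replicate (m j) (p j)).count a = 0 := by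
  rw [Multiset.count_sum']
  refine Finset.sum_eq_zero fun j _ => ?_
  rw [Multiset.count_replicate, if_neg (fun e => ha ⟨j, e⟩)]

lemma mem_sum_replicate {a : Ideal R} (m : Fin k → ℕ)
    (ha : a ∈ ∑ j, Multiset.replicate (m j) (p j)) : ∃ j, a = p j ∧ m j ≠ 0 := by
  obtain ⟨j, -, hj⟩ := Multiset.mem_sum.mp ha
  rw [Multiset.mem_replicate] at hj
  exact ⟨j, hj.2, hj.1⟩

end Count




section Main

variable [IsNoetherianRing R]

lemma main {n k : ℕ} {M : Fin n → Type*} [∀ i, AddCommGroup (M i)] [∀ i, Module R (M i)]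
    [∀ i, Module.Finite R (M i)] {p : Fin k → Ideal R}
    (hdist : Function.Injective p) (T : ℕ) :
    ∀ (c : Fin n → Fin k → ℕ) (G : ∀ i, Submodule R (M i)),
      (∑ i, ∑ j, c i j) ≤ T →
      (∀ i, Reaches (G i) (∑ j, Multiset.replicate (c i j) (p j))) →
      Reaches (Submodule.pi Set.univ G)
        (∑ j, Multiset.replicate (Finset.univ.sup fun i => c i j) (p j)) := by
  classical
  induction T with
  | zero =>
    intro c G hT hG
    have hall : ∀ i j, c i j = 0 := by
      intro i j
      have h1 : ∑ i, ∑ j, c i j = 0 := Nat.le_zero.mp hT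
      have h2 := (Finset.sum_eq_zero_iff.mp h1) i (Finset.mem_univ i)
      exact (Finset.sum_eq_zero_iff.mp h2) j (Finset.mem_univ j)
    have hGi : ∀ i, G i = ⊤ := by
      intro i
      refine (hG i).eq_top_of_zero ?_
      simp [hall]
    have h1 : Submodule.pi Set.univ G = ⊤ := pi_eq_top_iff.mpr hGi
    have h2 : ∀ j, (Finset.univ.sup fun i => c i j) = 0 := fun j =>
      Nat.le_zero.mp (Finset.sup_le fun i _ => (hall i j).le)
    rw [h1]
    have : (∑ j, Multiset.replicate (Finset.univ.sup fun i => c i j) (p j))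
        = (0 : Multiset (Ideal R)) := by simp [h2]
    rw [this]
    exact Reaches.top
  | succ T ih =>
    intro c G hT hG
    by_cases hall : ∀ i j, c i j = 0
    · -- same as base case
      have hGi : ∀ i, G i = ⊤ := fun i => (hG i).eq_top_of_zero (by simp [hall])
      rw [pi_eq_top_iff.mpr hGi]
      have h2 : ∀ j, (Finset.univ.sup fun i => c i j) = 0 := fun j =>
        Nat.le_zero.mp (Finset.sup_le fun i _ => (hall i j).le)
      have : (∑ j, Multiset.replicate (Finset.univ.sup fun i => c i j) (p j))
          = (0 : Multiset (Ideal R)) := by simp [h2]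
      rw [this]
      exact Reaches.top
    · push_neg at hall
      obtain ⟨i0, j0', hi0⟩ := hall
      set S : Set (Ideal R) := ⋃ i, associatedPrimes R (M i ⧸ G i) with hSdef
      -- S is nonempty
      have hGi0 : G i0 ≠ ⊤ := by
        intro he
        have h0 := hG i0
        rw [he] at h0
        have h1 := reaches_top h0
        have h2 := congrArg (Multiset.count (p j0')) h1
        rw [count_sum_replicate hdist] at h2
        simp at h2
        exact hi0 h2
      have hnt : Nontrivial (M i0 ⧸ G i0) :=
        Submodule.Quotient.nontrivial_iff.mpr hGi0
      have hSne : S.Nonempty := by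
        obtain ⟨q, hq⟩ := associatedPrimes.nonempty R (M i0 ⧸ G i0)
        exact ⟨q, Set.mem_iUnion.mpr ⟨i0, hq⟩⟩
      obtain ⟨q, hqS, hqmax'⟩ := (set_has_maximal_iff_noetherian.mpr inferInstance) S hSne
      have hqmax : ∀ q' ∈ S, q ≤ q' → q' ≤ q := by
        intro q' h1 h2
        by_contra h3
        exact hqmax' q' h1 (lt_of_le_not_ge h2 h3)
      have hOkmov : ∀ i, q ∈ associatedPrimes R (M i ⧸ G i) → Ok q (G i) := fun i hi =>
        ⟨hi, fun q' hq' hle => hqmax q' (Set.mem_iUnion.mpr ⟨i, hq'⟩) hle⟩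
      -- movers
      have hmove : ∀ i, q ∈ associatedPrimes R (M i ⧸ G i) →
          q ∈ (∑ j, Multiset.replicate (c i j) (p j)) ∧
          Reaches (colonSubmodule (G i) q)
            ((∑ j, Multiset.replicate (c i j) (p j)).erase q) := by
        intro i hi
        obtain ⟨u, hu⟩ := exists_reaches (colonSubmodule (G i) q)
        have h1 : Reaches (G i) (q ::ₘ u) := Reaches.step (hOkmov i hi) hu
        have h2 : q ::ₘ u = ∑ j, Multiset.replicate (c i j) (p j) := h1.unique (hG i)
        have hqmem : q ∈ ∑ j, Multiset.replicate (c i j) (p j) :=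
          h2 ▸ Multiset.mem_cons_self _ _
        have h3 : u = (∑ j, Multiset.replicate (c i j) (p j)).erase q := by
          rw [← h2, Multiset.erase_cons_head]
        exact ⟨hqmem, h3 ▸ hu⟩
      -- identify q = p j0
      obtain ⟨i1, hi1⟩ := Set.mem_iUnion.mp hqS
      obtain ⟨j0, hqp, hci1⟩ := mem_sum_replicate _ (hmove i1 hi1).1
      -- nonmovers
      have hnon : ∀ i, q ∉ associatedPrimes R (M i ⧸ G i) →
          colonSubmodule (G i) q = G i ∧ c i j0 = 0 := by
        intro i hi
        constructor
        · exact colon_eq_self_of_not_ass S (fun q' h => Set.mem_iUnion.mpr ⟨i, h⟩)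
            ⟨hqS, fun q' h1 h2 => hqmax q' h1 h2⟩ hi
        · by_contra hc
          have hqmem : q ∈ ∑ j, Multiset.replicate (c i j) (p j) := by
            rw [hqp]
            rw [← Multiset.count_pos, count_sum_replicate hdist]
            omega
          obtain ⟨q', hq', hle⟩ := (hG i).mem_le q hqmem
          have hle2 : q' ≤ q := hqmax q' (Set.mem_iUnion.mpr ⟨i, hq'⟩) hle
          exact hi ((le_antisymm hle2 hle) ▸ hq')
      -- new exponents
      set c' : Fin n → Fin k → ℕ := fun i j =>
        if q ∈ associatedPrimes R (M i ⧸ G i) ∧ j = j0 then c i j - 1 else c i j with hc'def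
      have hc'mov : ∀ i, q ∈ associatedPrimes R (M i ⧸ G i) → c' i j0 = c i j0 - 1 := by
        intro i hi; simp [hc'def, hi]
      have hc'ne : ∀ i, ∀ jj, jj ≠ j0 → c' i jj = c i jj := by
        intro i jj hj; simp [hc'def, hj]
      have hc'non : ∀ i, q ∉ associatedPrimes R (M i ⧸ G i) → ∀ jj, c' i jj = c i jj := by
        intro i hi jj; simp [hc'def, hi]
      have hc'le : ∀ i jj, c' i jj ≤ c i jj := by
        intro i jj; simp only [hc'def]; split <;> omega
      -- component step
      have hstep : ∀ i, Reaches (colonSubmodule (G i) q)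
          (∑ j, Multiset.replicate (c' i j) (p j)) := by
        intro i
        by_cases hi : q ∈ associatedPrimes R (M i ⧸ G i)
        · have herase : (∑ j, Multiset.replicate (c i j) (p j)).erase q
              = ∑ j, Multiset.replicate (c' i j) (p j) := by
            ext a
            by_cases ha : a ∈ Set.range p
            · obtain ⟨j, rfl⟩ := ha
              by_cases hj : j = j0
              · subst hj
                rw [← hqp, Multiset.count_erase_self, hqp, count_sum_replicate hdist,
                  count_sum_replicate hdist, hc'mov i hi]
              · rw [Multiset.count_erase_of_ne (by rw [hqp]; exact fun e => hj (hdist e)),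
                  count_sum_replicate hdist, count_sum_replicate hdist]
                simp only [hc'def, hj, and_false, if_false]
            · rw [Multiset.count_erase_of_ne (fun e => ha ⟨j0, by rw [← hqp, ← e]⟩),
                count_sum_replicate_of_notmem ha, count_sum_replicate_of_notmem ha]
          rw [← herase]
          exact (hmove i hi).2
        · have he := hnon i hi
          rw [he.1]
          simp only [fun jj => hc'non i hi jj]
          exact hG i
      -- total decreases
      have hc1pos : c i1 j0 ≠ 0 := hci1
      have hdec : (∑ i, ∑ j, c' i j) ≤ T := by
        have hlt1 : ∑ j, c' i1 j < ∑ j, c i1 j := by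
          refine Finset.sum_lt_sum (fun j _ => hc'le i1 j) ⟨j0, Finset.mem_univ j0, ?_⟩
          show c' i1 j0 < c i1 j0
          rw [hc'mov i1 hi1]
          omega
        have hlt : (∑ i, ∑ j, c' i j) < ∑ i, ∑ j, c i j :=
          Finset.sum_lt_sum (fun i _ => Finset.sum_le_sum fun j _ => hc'le i j)
            ⟨i1, Finset.mem_univ i1, hlt1⟩
        exact Nat.lt_succ_iff.mp (lt_of_lt_of_le hlt hT)
      -- apply IH
      have hIH := ih c' (fun i => colonSubmodule (G i) q) hdec hstep
      -- big step
      have hass : associatedPrimes R ((∀ i, M i) ⧸ Submodule.pi Set.univ G) = S :=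
        associatedPrimes_pi_quot G
      have hOkbig : Ok q (Submodule.pi Set.univ G) := by
        constructor
        · show q ∈ associatedPrimes R _
          rw [hass]; exact hqS
        · intro q' h1 h2
          exact hqmax q' (hass ▸ h1) h2
      have hbig : Reaches (Submodule.pi Set.univ G)
          (q ::ₘ ∑ j, Multiset.replicate (Finset.univ.sup fun i => c' i j) (p j)) := by
        refine Reaches.step hOkbig ?_
        rw [colon_pi]
        exact hIH
      -- final multiset equality
      have hsup0 : 1 ≤ Finset.univ.sup fun i => c i j0 := by
        have h5 : c i1 j0 ≤ Finset.univ.sup fun i => c i j0 :=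
          Finset.le_sup (f := fun i => c i j0) (Finset.mem_univ i1)
        omega
      have hsup : (Finset.univ.sup fun i => c' i j0) + 1 = Finset.univ.sup fun i => c i j0 := by
        have h1 : (Finset.univ.sup fun i => c' i j0) ≤ (Finset.univ.sup fun i => c i j0) - 1 := by
          refine Finset.sup_le fun i _ => ?_
          by_cases hi : q ∈ associatedPrimes R (M i ⧸ G i)
          · have hub : c i j0 ≤ Finset.univ.sup fun i => c i j0 :=
              Finset.le_sup (f := fun i => c i j0) (Finset.mem_univ i)
            rw [hc'mov i hi]
            omega
          · have h3 := (hnon i hi).2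
            rw [hc'non i hi j0, h3]
            omega
        have h2 : (Finset.univ.sup fun i => c i j0) - 1
            ≤ Finset.univ.sup fun i => c' i j0 := by
          obtain ⟨i2, -, hi2⟩ := Finset.exists_mem_eq_sup Finset.univ
            ⟨i1, Finset.mem_univ i1⟩ (fun i => c i j0)
          have hi2mov : q ∈ associatedPrimes R (M i2 ⧸ G i2) := by
            by_contra hc
            have := (hnon i2 hc).2
            omega
          have hub : c' i2 j0 ≤ Finset.univ.sup fun i => c' i j0 :=
            Finset.le_sup (f := fun i => c' i j0) (Finset.mem_univ i2)
          rw [hc'mov i2 hi2mov] at hub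
          omega
        omega
      have hfinal : (q ::ₘ ∑ j, Multiset.replicate (Finset.univ.sup fun i => c' i j) (p j))
          = ∑ j, Multiset.replicate (Finset.univ.sup fun i => c i j) (p j) := by
        ext a
        rw [Multiset.count_cons]
        by_cases ha : a ∈ Set.range p
        · obtain ⟨j, rfl⟩ := ha
          rw [count_sum_replicate hdist, count_sum_replicate hdist]
          by_cases hj : j = j0
          · subst hj
            rw [if_pos hqp.symm]
            omega
          · rw [if_neg (fun e => hj (hdist (by rw [hqp] at e; exact e)))]
            simp only [fun i => hc'ne i j hj]
            omega
        · rw [count_sum_replicate_of_notmem ha, count_sum_replicate_of_notmem ha,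
            if_neg (fun e => ha ⟨j0, by rw [← hqp, ← e]⟩)]
      rw [← hfinal]
      exact hbig

end Main


end GPIF

/-- If `P_{Mᵢ}(Nᵢ) = p₁^{r_{i1}}⋯p_k^{r_{ik}}` for each `i`, then the direct sum satisfies
`P_{⊕ᵢ Mᵢ}(⊕ᵢ Nᵢ) = p₁^{s₁}⋯p_k^{s_k}` where `s_j = maxᵢ r_{ij}`. -/
theorem gpif_pi_max {R : Type*} [CommRing R] [IsNoetherianRing R]
    {n : ℕ} (M : Fin n → Type*) [∀ i, AddCommGroup (M i)] [∀ i, Module R (M i)]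
    [∀ i, Module.Finite R (M i)]
    {k : ℕ} (p : Fin k → Ideal R) (hprime : ∀ j, (p j).IsPrime)
    (hdist : Function.Injective p) (r : Fin n → Fin k → ℕ)
    (N : ∀ i, Submodule R (M i)) (hN : ∀ i, N i ≠ ⊤)
    (h : ∀ i, HasGPIF (N i) ⊤ (∑ j, Multiset.replicate (r i j) (p j))) :
    HasGPIF (Submodule.pi Set.univ N) ⊤
      (∑ j, Multiset.replicate (Finset.univ.sup fun i => r i j) (p j)) := by
  classical
  rw [GPIF.hasGPIF_top_iff]
  exact GPIF.main hdist (∑ i, ∑ j, r i j) r N le_rfl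
    (fun i => (GPIF.hasGPIF_top_iff).mp (h i))
end
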